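/- Let S_n be the sum of n i.i.d. N(Δ, 2) variables with Δ > 0. For any ε > 0 and any integer n ≤ 4(1-ε)·log(T)/Δ², the probability P(S_n ≤ 0) ≥ (1 - 2/(nΔ²)) · T^{ε-1} / (2√(π·log T)). -/

import Mathlib

open MeasureTheory ProbabilityTheory Real Set Filter Topology

lemma pdf_conv (a b : ℝ) (u w : NNReal) (hu : u ≠ 0) (hw : w ≠ 0) (y : ℝ) :
    ∫ x : ℝ, gaussianPDFReal a u x * gaussianPDFReal (b + x) w y
      = gaussianPDFReal (a + b) (u + w) y := by
  have hu0 : (0:ℝ) < u := lt_of_le_of_ne u.coe_nonneg (by exact_mod_cast (Ne.symm hu))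
  have hw0 : (0:ℝ) < w := lt_of_le_of_ne w.coe_nonneg (by exact_mod_cast (Ne.symm hw))
  set k : ℝ := (u + w) / (2 * u * w) with hk
  have hkpos : 0 < k := by positivity
  set m : ℝ := (w * a + u * (y - b)) / (u + w) with hm
  set C : ℝ := (√(2 * π * u))⁻¹ * (√(2 * π * w))⁻¹ * rexp (- (y - (a + b))^2 / (2 * (u + w))) with hC
  have key : ∀ x : ℝ, gaussianPDFReal a u x * gaussianPDFReal (b + x) w y
      = C * rexp (- k * (x - m)^2) := by
    intro x
    have hexp : -(x - a)^2/(2*(u:ℝ)) + -(y-(b+x))^2/(2*(w:ℝ))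
        = -(y-(a+b))^2/(2*((u:ℝ)+(w:ℝ))) + (- k * (x-m)^2) := by
      rw [hk, hm]
      field_simp
      ring
    calc gaussianPDFReal a u x * gaussianPDFReal (b + x) w y
        = (√(2 * π * u))⁻¹ * (√(2 * π * w))⁻¹ *
          rexp (-(x - a)^2/(2*(u:ℝ)) + -(y-(b+x))^2/(2*(w:ℝ))) := by
          rw [Real.exp_add, gaussianPDFReal, gaussianPDFReal]; ring
      _ = C * rexp (- k * (x - m)^2) := by
          rw [hexp, Real.exp_add, hC]; push_cast; ring
  simp_rw [key]
  rw [integral_const_mul]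
  rw [show (∫ x : ℝ, rexp (-k * (x - m)^2)) = ∫ x : ℝ, rexp (-k * x^2) from
    integral_sub_right_eq_self (fun x => rexp (-k * x^2)) m]
  rw [integral_gaussian]
  rw [gaussianPDFReal]
  push_cast
  rw [hC]
  rw [show (√(2 * π * ↑u))⁻¹ * (√(2 * π * ↑w))⁻¹ * rexp (-(y - (a + b)) ^ 2 / (2 * (↑u + ↑w))) * √(π / k)
    = ((√(2 * π * ↑u))⁻¹ * (√(2 * π * ↑w))⁻¹ * √(π / k)) * rexp (-(y - (a + b)) ^ 2 / (2 * (↑u + ↑w))) by ring]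
  congr 1
  rw [← Real.sqrt_inv, ← Real.sqrt_inv, ← Real.sqrt_mul (by positivity), ← Real.sqrt_mul (by positivity)]
  congr 1
  rw [hk]
  field_simp
  ring_nf
  rw [← Real.sqrt_mul (by positivity), inv_mul_cancel₀ (by positivity), Real.sqrt_one]

lemma gaussianPDFReal_measurable2 (b : ℝ) (w : NNReal) :
    Measurable (fun p : ℝ × ℝ => gaussianPDFReal (b + p.1) w p.2) := by
  simp only [gaussianPDFReal]
  fun_prop

lemma gaussian_conv (a b : ℝ) (u w : NNReal) (hu : u ≠ 0) (hw : w ≠ 0) :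
    Measure.map (fun p : ℝ × ℝ => p.1 + p.2) ((gaussianReal a u).prod (gaussianReal b w))
      = gaussianReal (a + b) (u + w) := by
  have huw : u + w ≠ 0 := by positivity
  have hFm : Measurable (fun p : ℝ × ℝ => gaussianPDF (b + p.1) w p.2) :=
    (gaussianPDFReal_measurable2 b w).ennreal_ofReal
  ext s hs
  rw [Measure.map_apply measurable_add hs]
  rw [Measure.prod_apply (measurable_add hs)]
  have h1 : ∀ x : ℝ, gaussianReal b w (Prod.mk x ⁻¹' ((fun p : ℝ × ℝ => p.1 + p.2) ⁻¹' s))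
      = ∫⁻ y in s, gaussianPDF (b + x) w y := by
    intro x
    have h2 : (Prod.mk x ⁻¹' ((fun p : ℝ × ℝ => p.1 + p.2) ⁻¹' s)) = (x + ·) ⁻¹' s := rfl
    rw [h2, ← Measure.map_apply (measurable_const_add x) hs, gaussianReal_map_const_add,
      gaussianReal_apply _ hw s, add_comm b x]
  simp_rw [h1]
  have hGm : Measurable (fun x : ℝ => ∫⁻ y in s, gaussianPDF (b + x) w y) :=
    Measurable.lintegral_prod_right hFm
  rw [gaussianReal_of_var_ne_zero _ hu,
    lintegral_withDensity_eq_lintegral_mul _ (measurable_gaussianPDF a u) hGm]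
  simp only [Pi.mul_apply]
  have h3 : ∀ x : ℝ, gaussianPDF a u x * ∫⁻ y in s, gaussianPDF (b + x) w y
      = ∫⁻ y in s, gaussianPDF a u x * gaussianPDF (b + x) w y := by
    intro x
    exact (MeasureTheory.lintegral_const_mul _ (measurable_gaussianPDF (b + x) w)).symm
  simp_rw [h3]
  have hswap : AEMeasurable (Function.uncurry fun x y => gaussianPDF a u x * gaussianPDF (b + x) w y)
      (volume.prod (volume.restrict s)) := by
    apply Measurable.aemeasurable
    have : (Function.uncurry fun x y => gaussianPDF a u x * gaussianPDF (b + x) w y)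
        = fun p : ℝ × ℝ => gaussianPDF a u p.1 * gaussianPDF (b + p.1) w p.2 := rfl
    rw [this]
    exact ((measurable_gaussianPDF a u).comp measurable_fst).mul hFm
  rw [lintegral_lintegral_swap hswap]
  have h4 : ∀ y : ℝ, (∫⁻ x : ℝ, gaussianPDF a u x * gaussianPDF (b + x) w y)
      = gaussianPDF (a + b) (u + w) y := by
    intro y
    have hint : Integrable (fun x : ℝ => gaussianPDFReal a u x * gaussianPDFReal (b + x) w y) := by
      apply Integrable.mono' ((integrable_gaussianPDFReal a u).const_mul ((√(2 * π * w))⁻¹))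
      · exact ((measurable_gaussianPDFReal a u).mul
          ((gaussianPDFReal_measurable2 b w).comp (by fun_prop : Measurable (fun x : ℝ => (x, y))))).aestronglyMeasurable
      · refine Filter.Eventually.of_forall fun x => ?_
        rw [Real.norm_eq_abs, abs_of_nonneg (mul_nonneg (gaussianPDFReal_nonneg _ _ _) (gaussianPDFReal_nonneg _ _ _))]
        rw [mul_comm ((√(2 * π * ↑w))⁻¹)]
        apply mul_le_mul_of_nonneg_left _ (gaussianPDFReal_nonneg _ _ _)
        rw [gaussianPDFReal]
        nth_rewrite 2 [← mul_one ((√(2 * π * ↑w))⁻¹)]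
        apply mul_le_mul_of_nonneg_left _ (by positivity)
        apply Real.exp_le_one_iff.mpr
        apply div_nonpos_of_nonpos_of_nonneg (neg_nonpos_of_nonneg (sq_nonneg _)) (by positivity)
    simp_rw [gaussianPDF, ← ENNReal.ofReal_mul (gaussianPDFReal_nonneg a u _)]
    rw [← ofReal_integral_eq_lintegral_ofReal hint (Filter.Eventually.of_forall fun x =>
      mul_nonneg (gaussianPDFReal_nonneg _ _ _) (gaussianPDFReal_nonneg _ _ _))]
    rw [pdf_conv a b u w hu hw y]
  simp_rw [h4]
  rw [gaussianReal_apply _ huw s]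

lemma map_sum_gaussian {Ω : Type*} [MeasurableSpace Ω] (P : Measure Ω)
    [IsProbabilityMeasure P] (Δ : ℝ) (Z : ℕ → Ω → ℝ)
    (hmeas : ∀ i, Measurable (Z i))
    (hindep : iIndepFun Z P)
    (hdist : ∀ i, Measure.map (Z i) P = gaussianReal Δ 2)
    (k : ℕ) (hk : 1 ≤ k) :
    Measure.map (fun ω => ∑ i ∈ Finset.range k, Z i ω) P
      = gaussianReal (k * Δ) (2 * k) := by
  induction k with
  | zero => omega
  | succ k ih =>
    rcases Nat.eq_or_lt_of_le hk with h1 | h1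
    · simp only [← h1, Finset.sum_range_one]
      rw [hdist 0]
      norm_num
    · have hk1 : 1 ≤ k := by omega
      have hik := ih hk1
      have hSmeas : Measurable (fun ω => ∑ i ∈ Finset.range k, Z i ω) := by
        exact Finset.measurable_sum _ (fun i _ => hmeas i)
      have hindepS : IndepFun (fun ω => ∑ i ∈ Finset.range k, Z i ω) (Z k) P := by
        have := iIndepFun.indepFun_finsetSum_of_notMem hindep hmeas
          (Finset.notMem_range_self (n := k))
        convert this using 1
        ext ω
        simp
      have hpair : Measure.map (fun ω => ((∑ i ∈ Finset.range k, Z i ω), Z k ω)) P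
          = ((Measure.map (fun ω => ∑ i ∈ Finset.range k, Z i ω) P).prod
             (Measure.map (Z k) P)) := by
        exact (indepFun_iff_map_prod_eq_prod_map_map hSmeas.aemeasurable
          (hmeas k).aemeasurable).mp hindepS
      have hmap : Measure.map (fun ω => ∑ i ∈ Finset.range (k+1), Z i ω) P
          = Measure.map (fun p : ℝ × ℝ => p.1 + p.2)
              (Measure.map (fun ω => ((∑ i ∈ Finset.range k, Z i ω), Z k ω)) P) := by
        rw [Measure.map_map measurable_add (hSmeas.prodMk (hmeas k))]
        simp_rw [Finset.sum_range_succ]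
        rfl
      rw [hmap, hpair, hik, hdist k, gaussian_conv _ _ _ _ (by
          simp only [ne_eq, mul_eq_zero]
          push_neg
          exact ⟨two_ne_zero, Nat.cast_ne_zero.mpr (by omega)⟩) two_ne_zero]
      congr 1
      · push_cast; ring
      · push_cast; ring

lemma gaussian_Iic_lower (μ : ℝ) (hμ : 0 < μ) (v : NNReal) (hv : v ≠ 0) :
    (1 - (v:ℝ)/μ^2) * ((v:ℝ)/μ) * gaussianPDFReal μ v 0
      ≤ ∫ x in Set.Iic (0:ℝ), gaussianPDFReal μ v x := by
  have hv0 : (0:ℝ) < v := lt_of_le_of_ne v.coe_nonneg (by exact_mod_cast (Ne.symm hv))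
  set c : ℝ := (√(2 * π * v))⁻¹ with hc
  have hcpos : 0 < c := by positivity
  set H : ℝ → ℝ := fun x => ((v:ℝ)/(μ-x) - (v:ℝ)^2/(μ-x)^3) * (c * rexp (-(x-μ)^2/(2*(v:ℝ)))) with hH
  set L : ℝ → ℝ := fun x => (1 - 3*(v:ℝ)^2/(μ-x)^4) * gaussianPDFReal μ v x with hL
  have hpdf : ∀ x : ℝ, gaussianPDFReal μ v x = c * rexp (-(x-μ)^2/(2*(v:ℝ))) := fun x => rfl
  -- derivative
  have hderiv : ∀ x ∈ Iic (0:ℝ), HasDerivAt H (L x) x := by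
    intro x hx
    have hux : (0:ℝ) < μ - x := by simp only [mem_Iic] at hx; linarith
    have hne : μ - x ≠ 0 := ne_of_gt hux
    have h1 : HasDerivAt (fun x => μ - x) (-1 : ℝ) x := by
      simpa using (hasDerivAt_id x).const_sub μ
    have h2 : HasDerivAt (fun x => (v:ℝ)/(μ-x) - (v:ℝ)^2/(μ-x)^3)
        ((v:ℝ) * ((μ-x)^2)⁻¹ - (v:ℝ)^2 * (3*(μ-x)^2 * (-1)) * -(((μ-x)^3)^2)⁻¹) x := by
      simp_rw [div_eq_mul_inv]
      refine HasDerivAt.sub ?_ ?_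
      · have := (h1.inv hne).const_mul (v:ℝ)
        exact this.congr_deriv (by ring)
      · have h3 : HasDerivAt (fun x => (μ-x)^3) (3*(μ-x)^2 * (-1)) x := by
          simpa using h1.fun_pow 3
        have := (h3.inv (pow_ne_zero 3 hne)).const_mul ((v:ℝ)^2)
        exact this.congr_deriv (by ring)
    have h4 : HasDerivAt (fun x => c * rexp (-(x-μ)^2/(2*(v:ℝ))))
        (c * (rexp (-(x-μ)^2/(2*(v:ℝ))) * (-(2*(x-μ))/(2*(v:ℝ))))) x := by
      have he : HasDerivAt (fun x : ℝ => -(x-μ)^2/(2*(v:ℝ))) (-(2*(x-μ))/(2*(v:ℝ))) x := by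
        have : HasDerivAt (fun x : ℝ => -(x-μ)^2) (-(2*(x-μ))) x := by
          simpa using (((hasDerivAt_id x).sub_const μ).fun_pow 2).fun_neg
        simpa [div_eq_mul_inv] using this.mul_const ((2*(v:ℝ))⁻¹)
      exact (he.exp.const_mul c)
    have := h2.mul h4
    refine this.congr_deriv (Eq.symm ?_)
    simp only [hL, hpdf x]
    field_simp
    ring
  -- limit at -infty
  have hlim : Tendsto H atBot (𝓝 0) := by
    have hub : Tendsto (fun x : ℝ => μ - x) atBot atTop := by
      simpa [sub_eq_add_neg] using tendsto_atTop_add_const_left atBot μ tendsto_neg_atBot_atTop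
    have hg : Tendsto (fun x : ℝ => (v:ℝ)/(μ-x) - (v:ℝ)^2/(μ-x)^3) atBot (𝓝 0) := by
      have t1 : Tendsto (fun x : ℝ => (v:ℝ)/(μ-x)) atBot (𝓝 0) := by
        simpa using Tendsto.div_atTop (tendsto_const_nhds (x := (v:ℝ))) hub
      have t2 : Tendsto (fun x : ℝ => (v:ℝ)^2/(μ-x)^3) atBot (𝓝 0) := by
        simpa using Tendsto.div_atTop (tendsto_const_nhds (x := (v:ℝ)^2))
          ((tendsto_pow_atTop (by norm_num : (3:ℕ) ≠ 0)).comp hub)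
      simpa using t1.sub t2
    have hp : Tendsto (fun x : ℝ => c * rexp (-(x-μ)^2/(2*(v:ℝ)))) atBot (𝓝 0) := by
      have he : Tendsto (fun x : ℝ => -(x-μ)^2/(2*(v:ℝ))) atBot atBot := by
        apply Tendsto.atBot_div_const (by positivity)
        have h5 : Tendsto (fun x : ℝ => (μ - x)^2) atBot atTop :=
          (tendsto_pow_atTop (by norm_num : (2:ℕ) ≠ 0)).comp hub
        have h6 := tendsto_neg_atTop_atBot.comp h5
        refine h6.congr fun x => ?_
        simp only [Function.comp]
        ring
      have := Real.tendsto_exp_atBot.comp he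
      simpa using this.const_mul c
    simpa using hg.mul hp
  -- integrability of L on Iic 0
  have hLint : IntegrableOn L (Iic (0:ℝ)) := by
    apply Integrable.mono' (((integrable_gaussianPDFReal μ v).restrict).const_mul (1 + 3*(v:ℝ)^2/μ^4))
    · apply AEStronglyMeasurable.mul _ (measurable_gaussianPDFReal μ v).aestronglyMeasurable.restrict
      apply Measurable.aestronglyMeasurable
      fun_prop
    · filter_upwards [ae_restrict_mem measurableSet_Iic] with x hx
      have hux : μ ≤ μ - x := by simp only [mem_Iic] at hx; linarith
      have ht : 3*(v:ℝ)^2/(μ-x)^4 ≤ 3*(v:ℝ)^2/μ^4 := by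
        apply div_le_div_of_nonneg_left (by positivity) (by positivity)
        exact pow_le_pow_left₀ (le_of_lt hμ) hux 4
      have ht0 : 0 ≤ 3*(v:ℝ)^2/(μ-x)^4 := by positivity
      simp only [hL, Real.norm_eq_abs, abs_mul]
      rw [abs_of_nonneg (gaussianPDFReal_nonneg _ _ _)]
      apply mul_le_mul_of_nonneg_right _ (gaussianPDFReal_nonneg _ _ _)
      rw [abs_le]
      constructor <;> nlinarith
  -- FTC
  have hFTC : ∫ x in Iic (0:ℝ), L x = H 0 - 0 :=
    integral_Iic_of_hasDerivAt_of_tendsto' hderiv hLint hlim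
  have hH0 : H 0 = (1 - (v:ℝ)/μ^2) * ((v:ℝ)/μ) * gaussianPDFReal μ v 0 := by
    simp only [hH, hpdf 0, sub_zero]
    field_simp
  calc (1 - (v:ℝ)/μ^2) * ((v:ℝ)/μ) * gaussianPDFReal μ v 0
      = ∫ x in Iic (0:ℝ), L x := by rw [hFTC, sub_zero, hH0]
    _ ≤ ∫ x in Iic (0:ℝ), gaussianPDFReal μ v x := by
        apply setIntegral_mono_on hLint ((integrable_gaussianPDFReal μ v).restrict)
          measurableSet_Iic
        intro x hx
        simp only [hL]
        nth_rewrite 2 [← one_mul (gaussianPDFReal μ v x)]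
        apply mul_le_mul_of_nonneg_right _ (gaussianPDFReal_nonneg _ _ _)
        have : 0 ≤ 3*(v:ℝ)^2/(μ-x)^4 := by positivity
        linarith

/-- Let `S_n` be the sum of `n` i.i.d. `N(Δ,2)` variables with `Δ > 0`. For any `ε > 0`,
`T ≥ 1`, and integer `1 ≤ n ≤ 4(1-ε)·log(T)/Δ²`, we have
`P(S_n ≤ 0) ≥ (1 - 2/(nΔ²)) · T^{ε-1} / (2√(π·log T))`. -/
theorem small_budget_failure_probability {Ω : Type*} [MeasurableSpace Ω] (P : Measure Ω)
    [IsProbabilityMeasure P] (Δ : ℝ) (hΔ : 0 < Δ) (Z : ℕ → Ω → ℝ)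
    (hmeas : ∀ i, Measurable (Z i))
    (hindep : iIndepFun Z P)
    (hdist : ∀ i, Measure.map (Z i) P = gaussianReal Δ 2)
    (T : ℝ) (hT : 1 ≤ T) (ε : ℝ) (hε : 0 < ε)
    (n : ℕ) (hn : 1 ≤ n) (hnle : (n : ℝ) ≤ 4 * (1 - ε) * Real.log T / Δ ^ 2) :
    ENNReal.ofReal ((1 - 2 / (n * Δ ^ 2)) * T ^ (ε - 1) /
        (2 * Real.sqrt (π * Real.log T))) ≤
      P {ω | (∑ i ∈ Finset.range n, Z i ω) ≤ 0} := by
  have hn0 : (0:ℝ) < n := by exact_mod_cast hn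
  have hΔ2 : (0:ℝ) < Δ^2 := pow_pos hΔ 2
  have hnd : (n:ℝ) * Δ^2 ≤ 4 * (1 - ε) * Real.log T := by
    rw [le_div_iff₀ hΔ2] at hnle
    linarith
  have hlogT0 : 0 ≤ Real.log T := Real.log_nonneg hT
  have hεlog : 0 < (1 - ε) * Real.log T := by nlinarith [mul_pos hn0 hΔ2]
  have hlogT : 0 < Real.log T := by nlinarith
  have hε1 : ε < 1 := by nlinarith
  by_cases hA : 1 - 2 / ((n:ℝ) * Δ ^ 2) ≤ 0
  · rw [ENNReal.ofReal_eq_zero.mpr]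
    · exact zero_le'
    apply div_nonpos_of_nonpos_of_nonneg _ (by positivity)
    exact mul_nonpos_of_nonpos_of_nonneg hA (Real.rpow_nonneg (by linarith) _)
  push_neg at hA
  -- reduce to gaussian measure
  have hSmeas : Measurable (fun ω => ∑ i ∈ Finset.range n, Z i ω) :=
    Finset.measurable_sum _ (fun i _ => hmeas i)
  have hset : {ω | (∑ i ∈ Finset.range n, Z i ω) ≤ 0}
      = (fun ω => ∑ i ∈ Finset.range n, Z i ω) ⁻¹' (Iic 0) := rfl
  have hv : (2 * (n:NNReal)) ≠ 0 := by
    simp only [ne_eq, mul_eq_zero, not_or]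
    exact ⟨two_ne_zero, Nat.cast_ne_zero.mpr (by omega)⟩
  have hmap : P {ω | (∑ i ∈ Finset.range n, Z i ω) ≤ 0}
      = ENNReal.ofReal (∫ x in Iic (0:ℝ), gaussianPDFReal ((n:ℝ) * Δ) (2 * (n:NNReal)) x) := by
    rw [hset, ← Measure.map_apply hSmeas measurableSet_Iic,
      map_sum_gaussian P Δ Z hmeas hindep hdist n hn,
      gaussianReal_apply_eq_integral _ hv _]
  rw [hmap]
  apply ENNReal.ofReal_le_ofReal
  have hLB := gaussian_Iic_lower ((n:ℝ) * Δ) (by positivity) (2 * (n:NNReal)) hv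
  refine le_trans ?_ hLB
  -- numeric comparison
  have hcast : ((2 * (n:NNReal) : NNReal) : ℝ) = 2 * (n:ℝ) := by push_cast; ring
  rw [gaussianPDFReal, hcast]
  set E : ℝ := rexp (-(0 - (n:ℝ)*Δ)^2 / (2 * (2 * (n:ℝ)))) with hE
  set X : ℝ := 2 * Real.sqrt (π * Real.log T) with hX
  set Y : ℝ := (Δ/2) * Real.sqrt (2 * π * (2 * (n:ℝ))) with hY
  have hYpos : 0 < Y := by rw [hY]; positivity
  have hXpos : 0 < X := by rw [hX]; positivity
  have hY' : Y = Real.sqrt ((Δ/2)^2 * (2*π*(2*(n:ℝ)))) := by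
    rw [hY]
    conv_rhs => rw [Real.sqrt_mul (by positivity), Real.sqrt_sq (by positivity)]
  have hX' : X = Real.sqrt (2^2 * (π * Real.log T)) := by
    rw [hX]
    conv_rhs => rw [Real.sqrt_mul (by norm_num : (0:ℝ) ≤ 2^2), Real.sqrt_sq (by norm_num : (0:ℝ) ≤ 2)]
  have hYX : Y ≤ X := by
    rw [hY', hX']
    apply Real.sqrt_le_sqrt
    nlinarith [Real.pi_pos, mul_le_mul_of_nonneg_left hnd Real.pi_pos.le,
      mul_nonneg Real.pi_pos.le (mul_pos hε hlogT).le]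
  have hTE : T ^ (ε - 1) ≤ E := by
    rw [hE, Real.rpow_def_of_pos (by linarith)]
    apply Real.exp_le_exp.mpr
    have harg : -(0-(n:ℝ)*Δ)^2/(2*(2*(n:ℝ))) = -((n:ℝ)*Δ^2)/4 := by
      field_simp
      ring
    rw [harg]
    linarith
  have h2 : T ^ (ε - 1) / X ≤ E / Y := div_le_div₀ (Real.exp_pos _).le hTE hYpos hYX
  have hs : (0:ℝ) < Real.sqrt (2*π*(2*(n:ℝ))) := Real.sqrt_pos.mpr (by positivity)
  calc (1 - 2 / ((n:ℝ) * Δ ^ 2)) * T ^ (ε - 1) / X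
      = (1 - 2 / ((n:ℝ) * Δ ^ 2)) * (T ^ (ε - 1) / X) := by rw [mul_div_assoc]
    _ ≤ (1 - 2 / ((n:ℝ) * Δ ^ 2)) * (E / Y) := mul_le_mul_of_nonneg_left h2 hA.le
    _ = (1 - (2*(n:ℝ))/((n:ℝ)*Δ)^2) * ((2*(n:ℝ))/((n:ℝ)*Δ)) * ((Real.sqrt (2*π*(2*(n:ℝ))))⁻¹ * E) := by
        rw [hY]
        field_simp
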